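/- arXiv:1709.05210 — 2 statements merged into one kernel-verified Lean document; each statement's English description precedes it below -/
import Mathlib

section
/- Let A be an ℝ-linear map assigning to each tangent vector X an endomorphism A_X of a 4-dimensional real inner product space with orthogonal complex structure J, such that A_X ∘ J = -J ∘ A_X for all X (complex anti-linearity) and A_{JX} = -J ∘ A_X for all X (the almost Kähler condition). Then the tensor β defined by β(X,Y,Z,W) = g([A_X, A_Y]Z, W), viewed as a map Λ² → Λ², has image contained in ℂ·F when restricted to (1,1)-forms; moreover its component β̃ along F⊗F satisfies β̃ = -|A₁₁₂|² - |A₂₁₂|² where A_{αβγ} are the components of A in a unitary frame. -/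
open Complex

set_option maxHeartbeats 2000000
namespace Stmt5

/-- The standard model `V = ℝ⁴` of the 4-dimensional real inner product space. -/
abbrev V := EuclideanSpace ℝ (Fin 4)

/-- Standard basis vectors. -/
noncomputable def e (i : Fin 4) : V := EuclideanSpace.single i 1

/-- The standard orthogonal complex structure: `J e₀ = e₁`, `J e₁ = -e₀`,
`J e₂ = e₃`, `J e₃ = -e₂`. -/
def J : V →ₗ[ℝ] V where
  toFun v := WithLp.toLp 2 ![-(v 1), v 0, -(v 3), v 2]
  map_add' x y := by ext i; fin_cases i <;> (try simp [EuclideanSpace]) <;> (try ring)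
  map_smul' c x := by ext i; fin_cases i <;> (try simp [EuclideanSpace]) <;> (try ring)

/-- The fundamental 2-form `F = g(J·,·)`. -/
noncomputable def F (X Y : V) : ℝ := inner ℝ (J X) Y

/-- The complexified tangent space. -/
abbrev VC := Fin 4 → ℂ

/-- The complex-bilinear extension of `A` to `VC`, via the real components
`⟪A eᵢ eⱼ, e_k⟫`. -/
noncomputable def AC (A : V →ₗ[ℝ] V →ₗ[ℝ] V) (X Y : VC) : VC := fun k =>
  ∑ i : Fin 4, ∑ j : Fin 4, X i * Y j * ((inner ℝ (A (e i) (e j)) (e k) : ℝ) : ℂ)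

/-- The complex-bilinear extension of the metric `g` to `VC`. -/
noncomputable def gC (v w : VC) : ℂ := ∑ i : Fin 4, v i * w i

/-- The unitary frame vector `z₁ = (e₀ - i J e₀)/√2 = (e₀ - i e₁)/√2` of `T^{1,0}`. -/
noncomputable def z1 : VC := fun i => (![1, -Complex.I, 0, 0] i) / (Real.sqrt 2 : ℂ)

/-- The unitary frame vector `z₂ = (e₂ - i e₃)/√2`. -/
noncomputable def z2 : VC := fun i => (![0, 0, 1, -Complex.I] i) / (Real.sqrt 2 : ℂ)

/-- The component `A₁₁₂ = g(A_{z₁} z₁, z₂)`. -/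
noncomputable def A112 (A : V →ₗ[ℝ] V →ₗ[ℝ] V) : ℂ := gC (AC A z1 z1) z2

/-- The component `A₂₁₂ = g(A_{z₂} z₁, z₂)`. -/
noncomputable def A212 (A : V →ₗ[ℝ] V →ₗ[ℝ] V) : ℂ := gC (AC A z2 z1) z2

/-- The tensor `β(X,Y,Z,W) = g([A_X, A_Y] Z, W)`. -/
noncomputable def beta (A : V →ₗ[ℝ] V →ₗ[ℝ] V) (X Y Z W : V) : ℝ :=
  inner ℝ (A X (A Y Z) - A Y (A X Z)) W

/-- The component `β̃` of `β` along `F ⊗ F`: the value of `β` on the pair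
`(F/√2, F/√2)` of unit multiples of `F = e⁰∧e¹ + e²∧e³`. -/
noncomputable def betaTilde (A : V →ₗ[ℝ] V →ₗ[ℝ] V) : ℝ :=
  (1 / 2) * (beta A (e 0) (e 1) (e 0) (e 1) + beta A (e 0) (e 1) (e 2) (e 3)
    + beta A (e 2) (e 3) (e 0) (e 1) + beta A (e 2) (e 3) (e 2) (e 3))

/-- Let `A : V → End(V)` assign to each tangent vector a skew-symmetric
endomorphism, complex anti-linear (`A_X ∘ J = -J ∘ A_X`) and satisfying the almost
Kähler condition (`A_{JX} = -J ∘ A_X`).  Then for all `X, Y` the 2-form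
`(Z,W) ↦ β(X,Y,Z,W) = g([A_X,A_Y]Z,W)` is a (real) multiple of the fundamental form
`F` — i.e. `β`, viewed as a map `Λ² → Λ²`, has image contained in `ℂ·F` (in
particular on `(1,1)`-form inputs) — and the component `β̃` of `β` along `F ⊗ F`
satisfies `β̃ = -|A₁₁₂|² - |A₂₁₂|²` in a unitary frame. -/
theorem stmt_5 (A : V →ₗ[ℝ] V →ₗ[ℝ] V)
    (hskew : ∀ (X u v : V), (inner ℝ (A X u) v : ℝ) = -(inner ℝ u (A X v) : ℝ))
    (hanti : ∀ (X v : V), A X (J v) = -J (A X v))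
    (haK : ∀ (X v : V), A (J X) v = -J (A X v)) :
    (∀ X Y : V, ∃ lam : ℝ, ∀ Z W : V, beta A X Y Z W = lam * F Z W) ∧
      betaTilde A = -(‖A112 A‖) ^ 2 - (‖A212 A‖) ^ 2 := by
  have inner_e : ∀ (u : V) (k : Fin 4), (inner ℝ u (e k) : ℝ) = u k := by
    intro u k; simp [e, PiLp.inner_apply, EuclideanSpace.single_apply]
  have inner_e' : ∀ (u : V) (k : Fin 4), (inner ℝ (e k) u : ℝ) = u k := by
    intro u k; simp [e, PiLp.inner_apply, EuclideanSpace.single_apply]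
  have hJ0 : ∀ v : V, J v 0 = -(v 1) := fun v => rfl
  have hJ1 : ∀ v : V, J v 1 = v 0 := fun v => rfl
  have hJ2 : ∀ v : V, J v 2 = -(v 3) := fun v => rfl
  have hJ3 : ∀ v : V, J v 3 = v 2 := fun v => rfl
  have Je0 : J (e 0) = e 1 := by
    ext k; fin_cases k <;> simp [J, e, EuclideanSpace.single_apply]
  have Je2 : J (e 2) = e 3 := by
    ext k; fin_cases k <;> simp [J, e, EuclideanSpace.single_apply]
  have hs : ∀ (i j k : Fin 4), A (e i) (e j) k = -(A (e i) (e k) j) := by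
    intro i j k
    have h := hskew (e i) (e j) (e k)
    rw [inner_e, inner_e'] at h
    linarith
  have hv1 : ∀ i : Fin 4, A (e i) (e 1) = -J (A (e i) (e 0)) := by
    intro i; have h := hanti (e i) (e 0); rwa [Je0] at h
  have hv2 : ∀ i : Fin 4, A (e i) (e 3) = -J (A (e i) (e 2)) := by
    intro i; have h := hanti (e i) (e 2); rwa [Je2] at h
  have hv3 : ∀ j : Fin 4, A (e 1) (e j) = -J (A (e 0) (e j)) := by
    intro j; have h := haK (e 0) (e j); rwa [Je0] at h
  have hv4 : ∀ j : Fin 4, A (e 3) (e j) = -J (A (e 2) (e j)) := by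
    intro j; have h := haK (e 2) (e j); rwa [Je2] at h
  have h2_0 : ∀ i : Fin 4, A (e i) (e 1) 0 = A (e i) (e 0) 1 := by
    intro i
    have h := congrArg (fun v : V => v (0 : Fin 4)) (hv1 i)
    simp only [PiLp.neg_apply, LinearMap.neg_apply] at h
    rw [h]
    simp [hJ0]
  have h2_1 : ∀ i : Fin 4, A (e i) (e 1) 1 = -(A (e i) (e 0) 0) := by
    intro i
    have h := congrArg (fun v : V => v (1 : Fin 4)) (hv1 i)
    simp only [PiLp.neg_apply, LinearMap.neg_apply] at h
    rw [h]
    simp [hJ1]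
  have h2_2 : ∀ i : Fin 4, A (e i) (e 1) 2 = A (e i) (e 0) 3 := by
    intro i
    have h := congrArg (fun v : V => v (2 : Fin 4)) (hv1 i)
    simp only [PiLp.neg_apply, LinearMap.neg_apply] at h
    rw [h]
    simp [hJ2]
  have h2_3 : ∀ i : Fin 4, A (e i) (e 1) 3 = -(A (e i) (e 0) 2) := by
    intro i
    have h := congrArg (fun v : V => v (3 : Fin 4)) (hv1 i)
    simp only [PiLp.neg_apply, LinearMap.neg_apply] at h
    rw [h]
    simp [hJ3]
  have h3_0 : ∀ i : Fin 4, A (e i) (e 3) 0 = A (e i) (e 2) 1 := by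
    intro i
    have h := congrArg (fun v : V => v (0 : Fin 4)) (hv2 i)
    simp only [PiLp.neg_apply, LinearMap.neg_apply] at h
    rw [h]
    simp [hJ0]
  have h3_1 : ∀ i : Fin 4, A (e i) (e 3) 1 = -(A (e i) (e 2) 0) := by
    intro i
    have h := congrArg (fun v : V => v (1 : Fin 4)) (hv2 i)
    simp only [PiLp.neg_apply, LinearMap.neg_apply] at h
    rw [h]
    simp [hJ1]
  have h3_2 : ∀ i : Fin 4, A (e i) (e 3) 2 = A (e i) (e 2) 3 := by
    intro i
    have h := congrArg (fun v : V => v (2 : Fin 4)) (hv2 i)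
    simp only [PiLp.neg_apply, LinearMap.neg_apply] at h
    rw [h]
    simp [hJ2]
  have h3_3 : ∀ i : Fin 4, A (e i) (e 3) 3 = -(A (e i) (e 2) 2) := by
    intro i
    have h := congrArg (fun v : V => v (3 : Fin 4)) (hv2 i)
    simp only [PiLp.neg_apply, LinearMap.neg_apply] at h
    rw [h]
    simp [hJ3]
  have h4_0 : ∀ i : Fin 4, A (e 1) (e i) 0 = A (e 0) (e i) 1 := by
    intro i
    have h := congrArg (fun v : V => v (0 : Fin 4)) (hv3 i)
    simp only [PiLp.neg_apply, LinearMap.neg_apply] at h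
    rw [h]
    simp [hJ0]
  have h4_1 : ∀ i : Fin 4, A (e 1) (e i) 1 = -(A (e 0) (e i) 0) := by
    intro i
    have h := congrArg (fun v : V => v (1 : Fin 4)) (hv3 i)
    simp only [PiLp.neg_apply, LinearMap.neg_apply] at h
    rw [h]
    simp [hJ1]
  have h4_2 : ∀ i : Fin 4, A (e 1) (e i) 2 = A (e 0) (e i) 3 := by
    intro i
    have h := congrArg (fun v : V => v (2 : Fin 4)) (hv3 i)
    simp only [PiLp.neg_apply, LinearMap.neg_apply] at h
    rw [h]
    simp [hJ2]
  have h4_3 : ∀ i : Fin 4, A (e 1) (e i) 3 = -(A (e 0) (e i) 2) := by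
    intro i
    have h := congrArg (fun v : V => v (3 : Fin 4)) (hv3 i)
    simp only [PiLp.neg_apply, LinearMap.neg_apply] at h
    rw [h]
    simp [hJ3]
  have h5_0 : ∀ i : Fin 4, A (e 3) (e i) 0 = A (e 2) (e i) 1 := by
    intro i
    have h := congrArg (fun v : V => v (0 : Fin 4)) (hv4 i)
    simp only [PiLp.neg_apply, LinearMap.neg_apply] at h
    rw [h]
    simp [hJ0]
  have h5_1 : ∀ i : Fin 4, A (e 3) (e i) 1 = -(A (e 2) (e i) 0) := by
    intro i
    have h := congrArg (fun v : V => v (1 : Fin 4)) (hv4 i)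
    simp only [PiLp.neg_apply, LinearMap.neg_apply] at h
    rw [h]
    simp [hJ1]
  have h5_2 : ∀ i : Fin 4, A (e 3) (e i) 2 = A (e 2) (e i) 3 := by
    intro i
    have h := congrArg (fun v : V => v (2 : Fin 4)) (hv4 i)
    simp only [PiLp.neg_apply, LinearMap.neg_apply] at h
    rw [h]
    simp [hJ2]
  have h5_3 : ∀ i : Fin 4, A (e 3) (e i) 3 = -(A (e 2) (e i) 2) := by
    intro i
    have h := congrArg (fun v : V => v (3 : Fin 4)) (hv4 i)
    simp only [PiLp.neg_apply, LinearMap.neg_apply] at h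
    rw [h]
    simp [hJ3]
  set p := A (e 1) (e 3) 0 with hpd
  set q := A (e 1) (e 3) 1 with hqd
  set r := A (e 3) (e 3) 0 with hrd
  set s := A (e 3) (e 3) 1 with hsd
  have hB000 : A (e 0) (e 0) 0 = 0 := by
    simp only [hpd, hqd, hrd, hsd]; linear_combination (1/2) * (hs 0 0 0)
  have hB001 : A (e 0) (e 0) 1 = 0 := by
    simp only [hpd, hqd, hrd, hsd]; linear_combination (1/2) * (hs 0 0 1) + (-1/2) * (h2_0 0)
  have hB002 : A (e 0) (e 0) 2 = p := by
    simp only [hpd, hqd, hrd, hsd]; linear_combination (-1) * (hs 0 1 3) + 1 * (h2_3 0) + (-1) * (h4_0 3)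
  have hB003 : A (e 0) (e 0) 3 = q := by
    simp only [hpd, hqd, hrd, hsd]; linear_combination 1 * (hs 0 1 2) + (-1) * (hs 1 0 2) + (-1) * (hs 1 1 3) + (-1) * (h2_2 0) + 1 * (h2_3 1) + 1 * (h4_0 2)
  have hB010 : A (e 0) (e 1) 0 = 0 := by
    simp only [hpd, hqd, hrd, hsd]; linear_combination (1/2) * (hs 0 0 1) + (1/2) * (h2_0 0)
  have hB011 : A (e 0) (e 1) 1 = 0 := by
    simp only [hpd, hqd, hrd, hsd]; linear_combination (1/2) * (hs 0 1 1)
  have hB012 : A (e 0) (e 1) 2 = q := by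
    simp only [hpd, hqd, hrd, hsd]; linear_combination 1 * (hs 0 1 2) + (-1) * (hs 1 0 2) + (-1) * (hs 1 1 3) + 1 * (h2_3 1) + 1 * (h4_0 2)
  have hB013 : A (e 0) (e 1) 3 = -p := by
    simp only [hpd, hqd, hrd, hsd]; linear_combination 1 * (hs 0 1 3) + 1 * (h4_0 3)
  have hB020 : A (e 0) (e 2) 0 = -p := by
    simp only [hpd, hqd, hrd, hsd]; linear_combination 1 * (hs 0 0 2) + 1 * (hs 0 1 3) + (-1) * (h2_3 0) + 1 * (h4_0 3)
  have hB021 : A (e 0) (e 2) 1 = -q := by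
    simp only [hpd, hqd, hrd, hsd]; linear_combination 1 * (hs 1 0 2) + 1 * (hs 1 1 3) + (-1) * (h2_3 1) + (-1) * (h4_0 2)
  have hB022 : A (e 0) (e 2) 2 = 0 := by
    simp only [hpd, hqd, hrd, hsd]; linear_combination (1/2) * (hs 0 2 2)
  have hB023 : A (e 0) (e 2) 3 = 0 := by
    simp only [hpd, hqd, hrd, hsd]; linear_combination (1/2) * (hs 0 2 3) + (-1/2) * (h3_2 0)
  have hB030 : A (e 0) (e 3) 0 = -q := by
    simp only [hpd, hqd, hrd, hsd]; linear_combination 1 * (hs 0 0 3) + (-1) * (hs 0 1 2) + 1 * (hs 1 0 2) + 1 * (hs 1 1 3) + 1 * (h2_2 0) + (-1) * (h2_3 1) + (-1) * (h4_0 2)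
  have hB031 : A (e 0) (e 3) 1 = p := by
    simp only [hpd, hqd, hrd, hsd]; linear_combination (-1) * (h4_0 3)
  have hB032 : A (e 0) (e 3) 2 = 0 := by
    simp only [hpd, hqd, hrd, hsd]; linear_combination (1/2) * (hs 0 2 3) + (1/2) * (h3_2 0)
  have hB033 : A (e 0) (e 3) 3 = 0 := by
    simp only [hpd, hqd, hrd, hsd]; linear_combination (1/2) * (hs 0 3 3)
  have hB100 : A (e 1) (e 0) 0 = 0 := by
    simp only [hpd, hqd, hrd, hsd]; linear_combination (1/2) * (hs 1 0 0)
  have hB101 : A (e 1) (e 0) 1 = 0 := by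
    simp only [hpd, hqd, hrd, hsd]; linear_combination (1/2) * (hs 1 0 1) + (-1/2) * (h2_0 1)
  have hB102 : A (e 1) (e 0) 2 = q := by
    simp only [hpd, hqd, hrd, hsd]; linear_combination (-1) * (hs 1 1 3) + 1 * (h2_3 1)
  have hB103 : A (e 1) (e 0) 3 = -p := by
    simp only [hpd, hqd, hrd, hsd]; linear_combination 1 * (hs 1 0 3)
  have hB110 : A (e 1) (e 1) 0 = 0 := by
    simp only [hpd, hqd, hrd, hsd]; linear_combination (1/2) * (hs 1 0 1) + (1/2) * (h2_0 1)
  have hB111 : A (e 1) (e 1) 1 = 0 := by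
    simp only [hpd, hqd, hrd, hsd]; linear_combination (1/2) * (hs 1 1 1)
  have hB112 : A (e 1) (e 1) 2 = -p := by
    simp only [hpd, hqd, hrd, hsd]; linear_combination 1 * (hs 1 0 3) + 1 * (h2_2 1)
  have hB113 : A (e 1) (e 1) 3 = -q := by
    simp only [hpd, hqd, hrd, hsd]; linear_combination 1 * (hs 1 1 3)
  have hB120 : A (e 1) (e 2) 0 = -q := by
    simp only [hpd, hqd, hrd, hsd]; linear_combination 1 * (hs 1 0 2) + 1 * (hs 1 1 3) + (-1) * (h2_3 1)
  have hB121 : A (e 1) (e 2) 1 = p := by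
    simp only [hpd, hqd, hrd, hsd]; linear_combination (-1) * (hs 1 0 3) + 1 * (hs 1 1 2) + (-1) * (h2_2 1)
  have hB122 : A (e 1) (e 2) 2 = 0 := by
    simp only [hpd, hqd, hrd, hsd]; linear_combination (1/2) * (hs 1 2 2)
  have hB123 : A (e 1) (e 2) 3 = 0 := by
    simp only [hpd, hqd, hrd, hsd]; linear_combination (1/2) * (hs 1 2 3) + (-1/2) * (h3_2 1)
  have hB132 : A (e 1) (e 3) 2 = 0 := by
    simp only [hpd, hqd, hrd, hsd]; linear_combination (1/2) * (hs 1 2 3) + (1/2) * (h3_2 1)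
  have hB133 : A (e 1) (e 3) 3 = 0 := by
    simp only [hpd, hqd, hrd, hsd]; linear_combination (1/2) * (hs 1 3 3)
  have hB200 : A (e 2) (e 0) 0 = 0 := by
    simp only [hpd, hqd, hrd, hsd]; linear_combination (1/2) * (hs 2 0 0)
  have hB201 : A (e 2) (e 0) 1 = 0 := by
    simp only [hpd, hqd, hrd, hsd]; linear_combination (1/2) * (hs 2 0 1) + (-1/2) * (h2_0 2)
  have hB202 : A (e 2) (e 0) 2 = r := by
    simp only [hpd, hqd, hrd, hsd]; linear_combination (-1) * (hs 2 1 3) + 1 * (h2_3 2) + (-1) * (h5_0 3)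
  have hB203 : A (e 2) (e 0) 3 = s := by
    simp only [hpd, hqd, hrd, hsd]; linear_combination 1 * (hs 2 1 2) + (-1) * (hs 3 0 2) + (-1) * (hs 3 1 3) + (-1) * (h2_2 2) + 1 * (h2_3 3) + 1 * (h5_0 2)
  have hB210 : A (e 2) (e 1) 0 = 0 := by
    simp only [hpd, hqd, hrd, hsd]; linear_combination (1/2) * (hs 2 0 1) + (1/2) * (h2_0 2)
  have hB211 : A (e 2) (e 1) 1 = 0 := by
    simp only [hpd, hqd, hrd, hsd]; linear_combination (1/2) * (hs 2 1 1)
  have hB212 : A (e 2) (e 1) 2 = s := by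
    simp only [hpd, hqd, hrd, hsd]; linear_combination 1 * (hs 2 1 2) + (-1) * (hs 3 0 2) + (-1) * (hs 3 1 3) + 1 * (h2_3 3) + 1 * (h5_0 2)
  have hB213 : A (e 2) (e 1) 3 = -r := by
    simp only [hpd, hqd, hrd, hsd]; linear_combination 1 * (hs 2 1 3) + 1 * (h5_0 3)
  have hB220 : A (e 2) (e 2) 0 = -r := by
    simp only [hpd, hqd, hrd, hsd]; linear_combination 1 * (hs 2 0 2) + 1 * (hs 2 1 3) + (-1) * (h2_3 2) + 1 * (h5_0 3)
  have hB221 : A (e 2) (e 2) 1 = -s := by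
    simp only [hpd, hqd, hrd, hsd]; linear_combination 1 * (hs 3 0 2) + 1 * (hs 3 1 3) + (-1) * (h2_3 3) + (-1) * (h5_0 2)
  have hB222 : A (e 2) (e 2) 2 = 0 := by
    simp only [hpd, hqd, hrd, hsd]; linear_combination (1/2) * (hs 2 2 2)
  have hB223 : A (e 2) (e 2) 3 = 0 := by
    simp only [hpd, hqd, hrd, hsd]; linear_combination (1/2) * (hs 2 2 3) + (-1/2) * (h3_2 2)
  have hB230 : A (e 2) (e 3) 0 = -s := by
    simp only [hpd, hqd, hrd, hsd]; linear_combination 1 * (hs 2 0 3) + (-1) * (hs 2 1 2) + 1 * (hs 3 0 2) + 1 * (hs 3 1 3) + 1 * (h2_2 2) + (-1) * (h2_3 3) + (-1) * (h5_0 2)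
  have hB231 : A (e 2) (e 3) 1 = r := by
    simp only [hpd, hqd, hrd, hsd]; linear_combination (-1) * (h5_0 3)
  have hB232 : A (e 2) (e 3) 2 = 0 := by
    simp only [hpd, hqd, hrd, hsd]; linear_combination (1/2) * (hs 2 2 3) + (1/2) * (h3_2 2)
  have hB233 : A (e 2) (e 3) 3 = 0 := by
    simp only [hpd, hqd, hrd, hsd]; linear_combination (1/2) * (hs 2 3 3)
  have hB300 : A (e 3) (e 0) 0 = 0 := by
    simp only [hpd, hqd, hrd, hsd]; linear_combination (1/2) * (hs 3 0 0)
  have hB301 : A (e 3) (e 0) 1 = 0 := by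
    simp only [hpd, hqd, hrd, hsd]; linear_combination (1/2) * (hs 3 0 1) + (-1/2) * (h2_0 3)
  have hB302 : A (e 3) (e 0) 2 = s := by
    simp only [hpd, hqd, hrd, hsd]; linear_combination (-1) * (hs 3 1 3) + 1 * (h2_3 3)
  have hB303 : A (e 3) (e 0) 3 = -r := by
    simp only [hpd, hqd, hrd, hsd]; linear_combination 1 * (hs 3 0 3)
  have hB310 : A (e 3) (e 1) 0 = 0 := by
    simp only [hpd, hqd, hrd, hsd]; linear_combination (1/2) * (hs 3 0 1) + (1/2) * (h2_0 3)
  have hB311 : A (e 3) (e 1) 1 = 0 := by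
    simp only [hpd, hqd, hrd, hsd]; linear_combination (1/2) * (hs 3 1 1)
  have hB312 : A (e 3) (e 1) 2 = -r := by
    simp only [hpd, hqd, hrd, hsd]; linear_combination 1 * (hs 3 0 3) + 1 * (h2_2 3)
  have hB313 : A (e 3) (e 1) 3 = -s := by
    simp only [hpd, hqd, hrd, hsd]; linear_combination 1 * (hs 3 1 3)
  have hB320 : A (e 3) (e 2) 0 = -s := by
    simp only [hpd, hqd, hrd, hsd]; linear_combination 1 * (hs 3 0 2) + 1 * (hs 3 1 3) + (-1) * (h2_3 3)
  have hB321 : A (e 3) (e 2) 1 = r := by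
    simp only [hpd, hqd, hrd, hsd]; linear_combination (-1) * (hs 3 0 3) + 1 * (hs 3 1 2) + (-1) * (h2_2 3)
  have hB322 : A (e 3) (e 2) 2 = 0 := by
    simp only [hpd, hqd, hrd, hsd]; linear_combination (1/2) * (hs 3 2 2)
  have hB323 : A (e 3) (e 2) 3 = 0 := by
    simp only [hpd, hqd, hrd, hsd]; linear_combination (1/2) * (hs 3 2 3) + (-1/2) * (h3_2 3)
  have hB332 : A (e 3) (e 3) 2 = 0 := by
    simp only [hpd, hqd, hrd, hsd]; linear_combination (1/2) * (hs 3 2 3) + (1/2) * (h3_2 3)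
  have hB333 : A (e 3) (e 3) 3 = 0 := by
    simp only [hpd, hqd, hrd, hsd]; linear_combination (1/2) * (hs 3 3 3)
  have hB130 : A (e 1) (e 3) 0 = p := hpd.symm
  have hB131 : A (e 1) (e 3) 1 = q := hqd.symm
  have hB330 : A (e 3) (e 3) 0 = r := hrd.symm
  have hB331 : A (e 3) (e 3) 1 = s := hsd.symm
  have hcomp : ∀ (X Y : V) (k : Fin 4),
      A X Y k = ∑ i : Fin 4, ∑ j : Fin 4, X i * Y j * A (e i) (e j) k := by
    have hx : ∀ Z : V, Z = ∑ i : Fin 4, Z i • e i := by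
      intro Z; ext k
      simp [Fin.sum_univ_four, e, PiLp.add_apply, PiLp.smul_apply, EuclideanSpace.single_apply]
      fin_cases k <;> simp
    intro X Y k
    conv_lhs => rw [hx X, hx Y]
    simp only [map_sum, map_smul, LinearMap.sum_apply, LinearMap.smul_apply]
    simp [Fin.sum_univ_four, PiLp.add_apply, PiLp.smul_apply, smul_eq_mul]
    ring
  have hc0 : ∀ X Y : V, A X Y 0 = - X 0 * Y 2 * p - X 0 * Y 3 * q - X 1 * Y 2 * q + X 1 * Y 3 * p - X 2 * Y 2 * r - X 2 * Y 3 * s - X 3 * Y 2 * s + X 3 * Y 3 * r := by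
    intro X Y
    rw [hcomp X Y 0]
    simp only [Fin.sum_univ_four, hB000, hB010, hB020, hB030, hB100, hB110, hB120, hB130, hB200, hB210, hB220, hB230, hB300, hB310, hB320, hB330]
    ring
  have hc1 : ∀ X Y : V, A X Y 1 = - X 0 * Y 2 * q + X 0 * Y 3 * p + X 1 * Y 2 * p + X 1 * Y 3 * q - X 2 * Y 2 * s + X 2 * Y 3 * r + X 3 * Y 2 * r + X 3 * Y 3 * s := by
    intro X Y
    rw [hcomp X Y 1]
    simp only [Fin.sum_univ_four, hB001, hB011, hB021, hB031, hB101, hB111, hB121, hB131, hB201, hB211, hB221, hB231, hB301, hB311, hB321, hB331]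
    ring
  have hc2 : ∀ X Y : V, A X Y 2 = X 0 * Y 0 * p + X 0 * Y 1 * q + X 1 * Y 0 * q - X 1 * Y 1 * p + X 2 * Y 0 * r + X 2 * Y 1 * s + X 3 * Y 0 * s - X 3 * Y 1 * r := by
    intro X Y
    rw [hcomp X Y 2]
    simp only [Fin.sum_univ_four, hB002, hB012, hB022, hB032, hB102, hB112, hB122, hB132, hB202, hB212, hB222, hB232, hB302, hB312, hB322, hB332]
    ring
  have hc3 : ∀ X Y : V, A X Y 3 = X 0 * Y 0 * q - X 0 * Y 1 * p - X 1 * Y 0 * p - X 1 * Y 1 * q + X 2 * Y 0 * s - X 2 * Y 1 * r - X 3 * Y 0 * r - X 3 * Y 1 * s := by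
    intro X Y
    rw [hcomp X Y 3]
    simp only [Fin.sum_univ_four, hB003, hB013, hB023, hB033, hB103, hB113, hB123, hB133, hB203, hB213, hB223, hB233, hB303, hB313, hB323, hB333]
    ring
  have he00 : e 0 0 = 1 := by simp [e, EuclideanSpace.single_apply]
  have he01 : e 0 1 = 0 := by simp [e, EuclideanSpace.single_apply]
  have he02 : e 0 2 = 0 := by simp [e, EuclideanSpace.single_apply]
  have he03 : e 0 3 = 0 := by simp [e, EuclideanSpace.single_apply]
  have he10 : e 1 0 = 0 := by simp [e, EuclideanSpace.single_apply]
  have he11 : e 1 1 = 1 := by simp [e, EuclideanSpace.single_apply]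
  have he12 : e 1 2 = 0 := by simp [e, EuclideanSpace.single_apply]
  have he13 : e 1 3 = 0 := by simp [e, EuclideanSpace.single_apply]
  have he20 : e 2 0 = 0 := by simp [e, EuclideanSpace.single_apply]
  have he21 : e 2 1 = 0 := by simp [e, EuclideanSpace.single_apply]
  have he22 : e 2 2 = 1 := by simp [e, EuclideanSpace.single_apply]
  have he23 : e 2 3 = 0 := by simp [e, EuclideanSpace.single_apply]
  have he30 : e 3 0 = 0 := by simp [e, EuclideanSpace.single_apply]
  have he31 : e 3 1 = 0 := by simp [e, EuclideanSpace.single_apply]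
  have he32 : e 3 2 = 0 := by simp [e, EuclideanSpace.single_apply]
  have he33 : e 3 3 = 1 := by simp [e, EuclideanSpace.single_apply]
  have hbeta : ∀ X Y Z W : V, beta A X Y Z W =
      (A X (A Y Z) 0 - A Y (A X Z) 0) * W 0 + (A X (A Y Z) 1 - A Y (A X Z) 1) * W 1
      + (A X (A Y Z) 2 - A Y (A X Z) 2) * W 2 + (A X (A Y Z) 3 - A Y (A X Z) 3) * W 3 := by
    intro X Y Z W
    simp only [beta, PiLp.inner_apply, RCLike.inner_apply, conj_trivial,
      Fin.sum_univ_four, PiLp.sub_apply]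
    try ring
  constructor
  · intro X Y
    refine ⟨beta A X Y (e 0) (e 1), fun Z W => ?_⟩
    rw [hbeta, hbeta]
    simp only [F, PiLp.inner_apply, RCLike.inner_apply, conj_trivial, Fin.sum_univ_four,
      hJ0, hJ1, hJ2, hJ3, hc0, hc1, hc2, hc3, he00, he01, he02, he03, he10, he11, he12, he13, he20, he21, he22, he23, he30, he31, he32, he33]
    ring
  · have hsq : ((Real.sqrt 2 : ℝ) : ℂ) ^ 2 = 2 := by
      norm_cast
      rw [Real.sq_sqrt] <;> norm_num
    have hs2 : ((Real.sqrt 2 : ℝ) : ℂ) ≠ 0 := by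
      intro h
      rw [Complex.ofReal_eq_zero] at h
      have := Real.sqrt_pos.mpr (by norm_num : (0:ℝ) < 2)
      linarith
    have hone : ((Real.sqrt 2:ℝ):ℂ) ^ 7 * (((Real.sqrt 2:ℝ):ℂ))⁻¹ ^ 7 = 1 := by
      rw [← mul_pow, mul_inv_cancel₀ hs2, one_pow]
    have h4 : ((Real.sqrt 2:ℝ):ℂ) ^ 4 = 4 := by
      have h : ((Real.sqrt 2:ℝ):ℂ) ^ 4 = (((Real.sqrt 2:ℝ):ℂ) ^ 2) ^ 2 := by ring
      rw [h, hsq]; norm_num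
    have h112 : A112 A = (Real.sqrt 2 : ℂ) * ((p : ℂ) - (q : ℂ) * I) := by
      simp only [A112, gC, AC, z1, z2, Fin.sum_univ_four, inner_e]
      simp only [hB000, hB001, hB002, hB003, hB010, hB011, hB012, hB013,
        hB100, hB101, hB102, hB103, hB110, hB111, hB112, hB113]
      simp only [Matrix.cons_val_zero, Matrix.cons_val_one, Matrix.head_cons,
        Matrix.cons_val_two, Matrix.tail_cons, Matrix.cons_val_three]
      push_cast
      field_simp [hs2]
      ring_nf
      linear_combination (2*(p:ℂ) - 2*(q:ℂ)*Complex.I) * hone - ((p:ℂ) - (q:ℂ)*Complex.I) * h4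
        - 2*(p:ℂ) * Complex.I_sq + (2*Complex.I*(q:ℂ) - 2*(p:ℂ)) * hone
        + ((q:ℂ)*Complex.I - (p:ℂ)) * Complex.I_sq
    have h212 : A212 A = (Real.sqrt 2 : ℂ) * ((r : ℂ) - (s : ℂ) * I) := by
      simp only [A212, gC, AC, z1, z2, Fin.sum_univ_four, inner_e]
      simp only [hB200, hB201, hB202, hB203, hB210, hB211, hB212, hB213,
        hB300, hB301, hB302, hB303, hB310, hB311, hB312, hB313]
      simp only [Matrix.cons_val_zero, Matrix.cons_val_one, Matrix.head_cons,
        Matrix.cons_val_two, Matrix.tail_cons, Matrix.cons_val_three]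
      push_cast
      field_simp [hs2]
      ring_nf
      linear_combination (2*(r:ℂ) - 2*(s:ℂ)*Complex.I) * hone - ((r:ℂ) - (s:ℂ)*Complex.I) * h4
        - 2*(r:ℂ) * Complex.I_sq + (2*Complex.I*(s:ℂ) - 2*(r:ℂ)) * hone
        + ((s:ℂ)*Complex.I - (r:ℂ)) * Complex.I_sq
    have habs : ∀ x y : ℝ, (‖(Real.sqrt 2 : ℂ) * ((x : ℂ) - (y : ℂ) * I)‖) ^ 2
        = 2 * (x ^ 2 + y ^ 2) := by
      intro x y
      rw [norm_mul, mul_pow, Complex.sq_norm, Complex.sq_norm, Complex.normSq_apply,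
        Complex.normSq_apply]
      simp
      ring
    rw [h112, h212, habs, habs]
    simp only [betaTilde]
    rw [hbeta, hbeta, hbeta, hbeta]
    simp only [hc0, hc1, hc2, hc3, he00, he01, he02, he03, he10, he11, he12, he13, he20, he21, he22, he23, he30, he31, he32, he33]
    ring

end Stmt5
end

section
/- Assume the general reality constraints a + b = a' + b' and v ∈ ℝ hold for the curvature matrix entries (k, a, a', b, b', u, v, w, x, l with k,l,u,w ∈ ℝ). Then the 'constant holomorphic sectional curvature' conditions (x = 0, a' = -a, b = -a, l = k, u + 2v + w = 2k) hold if and only if both the 'self-duality' conditions (x = 0, a = b', u + 2v + w = k + l) and the 'Ricci form duality' conditions (k = l, a' + b = -(a + b')) hold. -/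
/-- Under the reality constraints `a + b = a' + b'` (and `v` real,
encoded by taking `v : ℝ`), the constant holomorphic sectional curvature conditions
`x = 0, a' = -a, b = -a, l = k, u + 2v + w = 2k` are equivalent to the conjunction of
the self-duality conditions `x = 0, a = b', u + 2v + w = k + l` and the Ricci form
duality conditions `k = l, a' + b = -(a + b')`. -/
theorem stmt_7 (a a' b b' x : ℂ) (k l u v w : ℝ)
    (hreal : a + b = a' + b') :
    (x = 0 ∧ a' = -a ∧ b = -a ∧ l = k ∧ u + 2 * v + w = 2 * k) ↔
      ((x = 0 ∧ a = b' ∧ u + 2 * v + w = k + l) ∧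
        (k = l ∧ a' + b = -(a + b'))) := by
  constructor
  · rintro ⟨hx, ha', hb, hl, hu⟩
    subst hx ha' hb hl
    have hb' : b' = a := by linear_combination -hreal
    subst hb'
    exact ⟨⟨rfl, rfl, by linarith⟩, rfl, by ring⟩
  · rintro ⟨⟨hx, hab, hu⟩, hkl, hd⟩
    subst hx hab hkl
    have hb : b = a' := by linear_combination hreal
    subst hb
    have h2 : b = -a := by linear_combination hd / 2
    exact ⟨rfl, h2, h2, rfl, by linarith⟩
end
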